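/- Let α = (α₁ < α₂ < ⋯ < α_{n−k}) be a strictly increasing sequence of positive integers, and consider the (n−k)×(n−k) matrix M with entries M_{i,j} = t^{α_j − i} / (α_j − i)! (where a term is 0 if α_j − i < 0). Then det M = t^{|α|} · Vdm(α) / α!, where |α| = ∑(α_j − j), α! = ∏ (α_j − 1)!, and Vdm(α) = ∏_{i<j} (α_j − α_i). -/

import Mathlib

open Finset

lemma aux_prod_smul_rat {R : Type*} [CommRing R] [Algebra ℚ R] {ι : Type*}
    (s : Finset ι) (b : ι → ℚ) (f : ι → R) :
    ∏ i ∈ s, b i • f i = (∏ i ∈ s, b i) • ∏ i ∈ s, f i := by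
  induction s using Finset.cons_induction_on with
  | empty => simp
  | cons _ _ hj ih =>
    rw [Finset.prod_cons, Finset.prod_cons, Finset.prod_cons, ih, smul_mul_smul_comm]

lemma aux_prod_pairs {d : ℕ} {M : Type*} [CommMonoid M] (f : Fin d → Fin d → M) :
    ∏ p ∈ Finset.univ.filter (fun p : Fin d × Fin d => p.1 < p.2), f p.1 p.2
      = ∏ i, ∏ j ∈ Finset.Ioi i, f i j := by
  rw [Finset.prod_sigma']
  refine Finset.prod_nbij' (fun p => ⟨p.1, p.2⟩) (fun x => (x.1, x.2)) ?_ ?_ ?_ ?_ ?_ <;>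
    simp [Finset.mem_Ioi]

lemma aux_det_rat {d : ℕ} (α : Fin d → ℕ) (hpos : ∀ j, 0 < α j) (hmono : StrictMono α) :
    Matrix.det (Matrix.of fun i j : Fin d =>
      if (i : ℕ) + 1 ≤ α j then (((α j - ((i : ℕ) + 1)).factorial : ℚ))⁻¹ else 0) =
    ((∏ p ∈ Finset.univ.filter (fun p : Fin d × Fin d => p.1 < p.2),
        (α p.2 - α p.1) : ℕ) : ℚ) / ((∏ j, (α j - 1).factorial : ℕ) : ℚ) := by
  have key : ∀ i j : Fin d,
      (if (i : ℕ) + 1 ≤ α j then (((α j - ((i : ℕ) + 1)).factorial : ℚ))⁻¹ else 0)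
      = (((α j - 1).factorial : ℚ))⁻¹ * (((α j - 1).descFactorial (i : ℕ) : ℕ) : ℚ) := by
    intro i j
    by_cases h : (i : ℕ) + 1 ≤ α j
    · rw [if_pos h]
      have h1 : (i : ℕ) ≤ α j - 1 := by omega
      have h2 := Nat.factorial_mul_descFactorial h1
      have h3 : α j - 1 - (i : ℕ) = α j - ((i : ℕ) + 1) := by omega
      rw [h3] at h2
      have hf1 : ((α j - ((i : ℕ) + 1)).factorial : ℚ) ≠ 0 := by
        exact_mod_cast Nat.factorial_ne_zero _
      have hf2 : (((α j - 1).descFactorial (i : ℕ) : ℕ) : ℚ) ≠ 0 := by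
        have : (α j - 1).descFactorial (i : ℕ) ≠ 0 := by
          rw [Ne, Nat.descFactorial_eq_zero_iff_lt]; omega
        exact_mod_cast this
      rw [← h2]
      push_cast
      field_simp
    · have hz : (α j - 1).descFactorial (i : ℕ) = 0 :=
        Nat.descFactorial_eq_zero_iff_lt.2 (by have := hpos j; omega)
      rw [if_neg h, hz]
      simp
  have hmat : (Matrix.of fun i j : Fin d =>
      if (i : ℕ) + 1 ≤ α j then (((α j - ((i : ℕ) + 1)).factorial : ℚ))⁻¹ else 0)
      = Matrix.of (fun i j : Fin d => (((α j - 1).factorial : ℚ))⁻¹ *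
          (((α j - 1).descFactorial (i : ℕ) : ℕ) : ℚ)) := by
    ext i j; exact key i j
  rw [hmat, Matrix.det_mul_row (fun j : Fin d => (((α j - 1).factorial : ℚ))⁻¹)
    (fun i j : Fin d => (((α j - 1).descFactorial (i : ℕ) : ℕ) : ℚ))]
  have hdesc : (Matrix.det fun i j : Fin d =>
      (((α j - 1).descFactorial (i : ℕ) : ℕ) : ℚ))
      = Matrix.det (Matrix.vandermonde (fun j : Fin d => ((α j - 1 : ℕ) : ℚ))) := by
    show Matrix.det (Matrix.of fun i j : Fin d =>
      (((α j - 1).descFactorial (i : ℕ) : ℕ) : ℚ)) = _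
    rw [Matrix.det_eval_matrixOfPolynomials_eq_det_vandermonde
      (fun j : Fin d => ((α j - 1 : ℕ) : ℚ)) (fun i : Fin d => descPochhammer ℚ (i : ℕ))
      (fun i => descPochhammer_natDegree ℚ (i : ℕ))
      (fun i => monic_descPochhammer ℚ (i : ℕ))]
    rw [← Matrix.det_transpose]
    congr 1
    ext i j
    simp [Matrix.transpose_apply, descPochhammer_eval_eq_descFactorial]
  rw [hdesc, Matrix.det_vandermonde]
  have hv : ∀ i j : Fin d, i < j →
      ((α j - 1 : ℕ) : ℚ) - ((α i - 1 : ℕ) : ℚ) = ((α j - α i : ℕ) : ℚ) := by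
    intro i j hij
    have := hmono hij
    have h1 := hpos i
    push_cast [Nat.cast_sub (by omega : α i ≤ α j), Nat.cast_sub (by omega : 1 ≤ α i),
      Nat.cast_sub (by omega : 1 ≤ α j)]
    ring
  have hVdm : (∏ i : Fin d, ∏ j ∈ Finset.Ioi i,
        (((α j - 1 : ℕ) : ℚ) - ((α i - 1 : ℕ) : ℚ)))
      = ((∏ p ∈ Finset.univ.filter (fun p : Fin d × Fin d => p.1 < p.2),
          (α p.2 - α p.1) : ℕ) : ℚ) := by
    rw [Nat.cast_prod, aux_prod_pairs (fun i j : Fin d => ((α j - α i : ℕ) : ℚ))]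
    exact Finset.prod_congr rfl (fun i _ => Finset.prod_congr rfl
      (fun j hj => hv i j (Finset.mem_Ioi.mp hj)))
  have hfactcast : ((∏ j, (α j - 1).factorial : ℕ) : ℚ)⁻¹
      = ∏ j, (((α j - 1).factorial : ℚ))⁻¹ := by
    rw [Nat.cast_prod, Finset.prod_inv_distrib]
  rw [← hVdm, div_eq_mul_inv, hfactcast, mul_comm]

theorem det_osculating_minor (R : Type*) [CommRing R] [Algebra ℚ R]
    (d : ℕ) (hd : 1 ≤ d) (α : Fin d → ℕ) (hpos : ∀ j, 0 < α j)
    (hmono : StrictMono α) (t : R) :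
    Matrix.det (Matrix.of fun i j : Fin d =>
      if (i : ℕ) + 1 ≤ α j then
        (((α j - ((i : ℕ) + 1)).factorial : ℚ))⁻¹ • t ^ (α j - ((i : ℕ) + 1))
      else 0) =
    (((∏ p ∈ Finset.univ.filter (fun p : Fin d × Fin d => p.1 < p.2),
        (α p.2 - α p.1) : ℕ) : ℚ) / ((∏ j, (α j - 1).factorial : ℕ) : ℚ)) •
      t ^ ((∑ j, α j) - (∑ j : Fin d, ((j : ℕ) + 1))) := by
  classical
  set E : ℕ := (∑ j, α j) - (∑ j : Fin d, ((j : ℕ) + 1)) with hE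
  set c : Fin d → Fin d → ℚ := fun i j =>
    if (i : ℕ) + 1 ≤ α j then (((α j - ((i : ℕ) + 1)).factorial : ℚ))⁻¹ else 0 with hc
  have step : ∀ σ : Equiv.Perm (Fin d),
      (∏ i, (Matrix.of fun i j : Fin d =>
        if (i : ℕ) + 1 ≤ α j then
          (((α j - ((i : ℕ) + 1)).factorial : ℚ))⁻¹ • t ^ (α j - ((i : ℕ) + 1))
        else 0) (σ i) i)
      = (∏ i, c (σ i) i) • t ^ E := by
    intro σ
    by_cases hσ : ∀ i, ((σ i : ℕ) + 1 ≤ α i)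
    · have h1 : ∀ i, (Matrix.of fun i j : Fin d =>
          if (i : ℕ) + 1 ≤ α j then
            (((α j - ((i : ℕ) + 1)).factorial : ℚ))⁻¹ • t ^ (α j - ((i : ℕ) + 1))
          else 0) (σ i) i = c (σ i) i • t ^ (α i - ((σ i : ℕ) + 1)) := by
        intro i
        simp only [Matrix.of_apply, hc, if_pos (hσ i)]
      rw [Finset.prod_congr rfl (fun i _ => h1 i), aux_prod_smul_rat,
        Finset.prod_pow_eq_pow_sum]
      congr 2
      have hsum : ∑ i, (α i - ((σ i : ℕ) + 1)) = (∑ i, α i) - ∑ i, ((σ i : ℕ) + 1) := by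
        rw [eq_tsub_iff_add_eq_of_le, ← Finset.sum_add_distrib]
        · exact Finset.sum_congr rfl (fun i _ => by have := hσ i; omega)
        · exact Finset.sum_le_sum (fun i _ => hσ i)
      rw [hsum, hE]
      congr 1
      exact Equiv.sum_comp σ (fun j : Fin d => (j : ℕ) + 1)
    · push_neg at hσ
      obtain ⟨i, hi⟩ := hσ
      have hz1 : (Matrix.of fun i j : Fin d =>
          if (i : ℕ) + 1 ≤ α j then
            (((α j - ((i : ℕ) + 1)).factorial : ℚ))⁻¹ • t ^ (α j - ((i : ℕ) + 1))
          else 0) (σ i) i = 0 := by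
        simp only [Matrix.of_apply, if_neg (not_le.mpr hi)]
      have hz2 : c (σ i) i = 0 := by
        simp only [hc, if_neg (not_le.mpr hi)]
      rw [Finset.prod_eq_zero (f := fun x : Fin d => (Matrix.of fun i j : Fin d =>
          if (i : ℕ) + 1 ≤ α j then
            (((α j - ((i : ℕ) + 1)).factorial : ℚ))⁻¹ • t ^ (α j - ((i : ℕ) + 1))
          else 0) (σ x) x) (Finset.mem_univ i) hz1,
        Finset.prod_eq_zero (f := fun x : Fin d => c (σ x) x) (Finset.mem_univ i) hz2,
        zero_smul]
  rw [Matrix.det_apply]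
  have step2 : ∀ σ : Equiv.Perm (Fin d),
      (Equiv.Perm.sign σ • ∏ i, (Matrix.of fun i j : Fin d =>
        if (i : ℕ) + 1 ≤ α j then
          (((α j - ((i : ℕ) + 1)).factorial : ℚ))⁻¹ • t ^ (α j - ((i : ℕ) + 1))
        else 0) (σ i) i)
      = ((Equiv.Perm.sign σ : ℤ) • ∏ i, c (σ i) i) • t ^ E := by
    intro σ
    rw [step σ, Units.smul_def, smul_assoc]
  rw [Finset.sum_congr rfl (fun σ _ => step2 σ), ← Finset.sum_smul]
  congr 1
  have := aux_det_rat α hpos hmono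
  rw [Matrix.det_apply] at this
  rw [← this]
  rfl
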